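/- Let K be a field, r ∈ K* not a root of unity, and σ the K-algebra automorphism of the Laurent polynomial ring K[h, h⁻¹] with σ(h) = r·h. Then K[h,h⁻¹] is σ-simple: the only σ-invariant ideals of K[h, h⁻¹] are the zero ideal and the whole ring. -/

import Mathlib

open LaurentPolynomial

private lemma sigma_C {K : Type*} [Field K]
    (σ : LaurentPolynomial K ≃ₐ[K] LaurentPolynomial K) (a : K) : σ (C a) = C a := by
  rw [C_eq_algebraMap]; exact σ.commutes a

private lemma sigma_T {K : Type*} [Field K] (r : K) (hr : r ≠ 0)
    (σ : LaurentPolynomial K ≃ₐ[K] LaurentPolynomial K)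
    (hσ : σ (T 1) = C r * T 1) :
    ∀ n : ℤ, σ (T n) = C (r ^ n) * T n := by
  have hneg : σ (T (-1)) = C r⁻¹ * T (-1) := by
    have h1 : σ (T 1) * σ (T (-1)) = 1 := by
      rw [← map_mul, ← T_add]; simp
    have h2 : (C r⁻¹ * T (-1)) * σ (T 1) = 1 := by
      rw [hσ, mul_mul_mul_comm, ← map_mul, inv_mul_cancel₀ hr, map_one, one_mul, ← T_add]
      simp
    calc σ (T (-1)) = ((C r⁻¹ * T (-1)) * σ (T 1)) * σ (T (-1)) := by rw [h2, one_mul]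
      _ = (C r⁻¹ * T (-1)) * (σ (T 1) * σ (T (-1))) := by ring
      _ = C r⁻¹ * T (-1) := by rw [h1, mul_one]
  intro n
  induction n using Int.induction_on with
  | zero => simp
  | succ k ih =>
      rw [T_add, map_mul, ih, hσ, mul_mul_mul_comm, ← map_mul, ← T_add, zpow_add_one₀ hr]
  | pred k ih =>
      have : (-(k : ℤ) - 1) = (-(k : ℤ)) + (-1) := by ring
      rw [this, T_add, map_mul, ih, hneg, mul_mul_mul_comm, ← map_mul, ← T_add,
        zpow_add₀ hr, zpow_neg_one]

private lemma sigma_apply {K : Type*} [Field K] (r : K) (hr : r ≠ 0)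
    (σ : LaurentPolynomial K ≃ₐ[K] LaurentPolynomial K)
    (hσ : σ (T 1) = C r * T 1) (p : LaurentPolynomial K) (m : ℤ) :
    (σ p).coeff m = r ^ m * p.coeff m := by
  induction p using AddMonoidAlgebra.induction with
  | zero => simp
  | single_add n a f _ _ ih =>
      have hs : σ (AddMonoidAlgebra.single n a : LaurentPolynomial K)
          = AddMonoidAlgebra.single n (r ^ n * a) := by
        rw [single_eq_C_mul_T, map_mul, sigma_C, sigma_T r hr σ hσ, ← mul_assoc, ← map_mul,
          mul_comm a, ← single_eq_C_mul_T]
      rw [map_add, hs, AddMonoidAlgebra.coeff_add, AddMonoidAlgebra.coeff_add,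
        AddMonoidAlgebra.coeff_single, AddMonoidAlgebra.coeff_single]
      rw [Finsupp.add_apply, Finsupp.add_apply, ih, Finsupp.single_apply, Finsupp.single_apply, mul_add]
      congr 1
      split
      · next h => subst h; ring
      · simp

/-- If `r` is not a root of unity and `σ` is the `K`-algebra automorphism of the
Laurent polynomial ring with `σ(h) = r·h`, then `K[h,h⁻¹]` is σ-simple: its only
σ-invariant ideals are the zero ideal and the whole ring. -/
theorem laurent_sigma_simple {K : Type*} [Field K] [CharZero K]
    (r : K) (hr : r ≠ 0) (hru : ∀ n : ℕ, 1 ≤ n → r ^ n ≠ 1)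
    (σ : LaurentPolynomial K ≃ₐ[K] LaurentPolynomial K)
    (hσ : σ (T 1) = C r * T 1)
    (I : Ideal (LaurentPolynomial K))
    (hI : ∀ p : LaurentPolynomial K, p ∈ I ↔ σ p ∈ I) :
    I = ⊥ ∨ I = ⊤ := by
  -- zpow injectivity
  have hzpow : ∀ m n : ℤ, r ^ m = r ^ n → m = n := by
    have h1 : ∀ m : ℤ, 0 < m → r ^ m ≠ 1 := by
      intro m hm h
      have : r ^ m.toNat = 1 := by
        rw [← zpow_natCast, Int.toNat_of_nonneg hm.le, h]
      exact hru m.toNat (by omega) this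
    intro m n h
    by_contra hne
    rcases lt_or_gt_of_ne hne with hlt | hlt
    · exact h1 (n - m) (by omega) (by rw [zpow_sub₀ hr, ← h, div_self (zpow_ne_zero _ hr)])
    · exact h1 (m - n) (by omega) (by rw [zpow_sub₀ hr, h, div_self (zpow_ne_zero _ hr)])
  have key : ∀ k : ℕ, ∀ p : LaurentPolynomial K,
      p.coeff.support.card ≤ k → p ∈ I → p ≠ 0 → (1 : LaurentPolynomial K) ∈ I := by
    intro k
    induction k with
    | zero =>
        intro p hc _ hp0
        exact absurd (AddMonoidAlgebra.coeff_eq_zero.mp (Finsupp.support_eq_empty.mp (Finset.card_eq_zero.mp (Nat.le_zero.mp hc))))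
          hp0
    | succ k ih =>
        intro p hc hpI hp0
        obtain ⟨a, ha⟩ : p.coeff.support.Nonempty :=
          Finsupp.support_nonempty_iff.mpr (mt AddMonoidAlgebra.coeff_eq_zero.mp hp0)
        have hpa : p.coeff a ≠ 0 := Finsupp.mem_support_iff.mp ha
        by_cases hsing : p.coeff.support = {a}
        · -- p = single a (p a) is a unit times element of I
          obtain ⟨c, hc0, hp_eq⟩ : ∃ c : K, c ≠ 0 ∧ p = C c * T a :=
            ⟨p.coeff a, hpa, by rw [← single_eq_C_mul_T]
                                exact AddMonoidAlgebra.coeff_injective (Finsupp.support_eq_singleton.mp hsing).2⟩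
          have hmem : (C c⁻¹ * T (-a)) * p ∈ I := I.mul_mem_left _ hpI
          have hone : (C c⁻¹ * T (-a)) * p = 1 := by
            rw [hp_eq, mul_mul_mul_comm, ← map_mul,
              inv_mul_cancel₀ hc0, map_one, one_mul, ← T_add]
            simp
          rwa [hone] at hmem
        · -- there is b ∈ support with b ≠ a
          obtain ⟨b, hb, hba⟩ : ∃ b ∈ p.coeff.support, b ≠ a := by
            by_contra h
            push_neg at h
            exact hsing (Finset.eq_singleton_iff_unique_mem.mpr ⟨ha, h⟩)
          have hpb : p.coeff b ≠ 0 := Finsupp.mem_support_iff.mp hb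
          set q : LaurentPolynomial K := σ p - C (r ^ a) * p with hq
          have hqI : q ∈ I := sub_mem ((hI p).mp hpI) (I.mul_mem_left _ hpI)
          have hq_apply : ∀ m : ℤ, q.coeff m = (r ^ m - r ^ a) * p.coeff m := by
            intro m
            have h2 : (C (r ^ a) * p).coeff m = r ^ a * p.coeff m :=
              AddMonoidAlgebra.coeff_single_zero_mul p (r ^ a) m
            have : q.coeff m = (σ p).coeff m - (C (r ^ a) * p).coeff m := rfl
            rw [this, sigma_apply r hr σ hσ, h2, sub_mul]
          have hqb : q.coeff b ≠ 0 := by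
            rw [hq_apply]
            exact mul_ne_zero (sub_ne_zero.mpr fun h => hba (hzpow b a h)) hpb
          have hq0 : q ≠ 0 := fun h => hqb (by rw [h]; rfl)
          have hsub : q.coeff.support ⊆ p.coeff.support.erase a := by
            intro m hm
            have hqm : q.coeff m ≠ 0 := Finsupp.mem_support_iff.mp hm
            rw [hq_apply] at hqm
            have hpm : p.coeff m ≠ 0 := fun h => hqm (by rw [h, mul_zero])
            have hma : m ≠ a := by
              rintro rfl
              exact hqm (by rw [sub_self, zero_mul])
            exact Finset.mem_erase.mpr ⟨hma, Finsupp.mem_support_iff.mpr hpm⟩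
          have hcard : q.coeff.support.card ≤ k := by
            have h1 := Finset.card_le_card hsub
            have h2 := Finset.card_erase_of_mem ha
            omega
          exact ih q hcard hqI hq0
  by_cases hbot : I = ⊥
  · exact Or.inl hbot
  · right
    obtain ⟨p, hpI, hp0⟩ := Submodule.exists_mem_ne_zero_of_ne_bot hbot
    exact (Ideal.eq_top_iff_one I).mpr (key p.coeff.support.card p le_rfl hpI hp0)
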